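/- arXiv:1808.07603 — 2 statements merged into one kernel-verified Lean document; each statement's English description precedes it below -/
import Mathlib

section
/- There is no nontrivial ε-differentially private mechanism c* that on every database instance D outputs, with probability 1, a set of values contained in the active domain c(D) of D, provided the intersection of active domains over all database instances is empty. Any such mechanism must return the empty set with probability 1 on every instance. -/
/-- "Bad bins" theorem: there is no nontrivial ε-differentially private mechanism
that only returns subsets of the active domain.  Model: `P D S` is the probability
that the mechanism outputs the value set `S : Set V` on database `D`, `adom D` is
the active domain of `D`.  If the mechanism never outputs a set that is not
contained in the active domain, the set of instances is connected by neighbor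
chains, and the intersection of all active domains is empty, then the mechanism
returns the empty set with probability 1 on every instance. -/
theorem no_active_domain_mechanism {Ω V : Type*} (neighbor : Ω → Ω → Prop)
    (P : Ω → Set V → ℝ) (adom : Ω → Set V) (ε : ℝ)
    (hnonneg : ∀ D S, 0 ≤ P D S)
    (htotal : ∀ D, HasSum (fun S : Set V => P D S) 1)
    (hDP : ∀ D D', neighbor D D' → ∀ S : Set V, P D S ≤ Real.exp ε * P D' S)
    (hconn : ∀ D D' : Ω, Relation.ReflTransGen neighbor D D')
    (hactive : ∀ D : Ω, ∀ S : Set V, ¬ S ⊆ adom D → P D S = 0)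
    (hempty : (⋂ D : Ω, adom D) = ∅) :
    ∀ D : Ω, P D (∅ : Set V) = 1 := by
  intro D
  -- every nonempty S has probability 0 on every instance
  have hzero : ∀ S : Set V, S ≠ ∅ → P D S = 0 := by
    intro S hS
    obtain ⟨v, hv⟩ := Set.nonempty_iff_ne_empty.mpr hS
    -- find D' with v ∉ adom D'
    have : v ∉ ⋂ D : Ω, adom D := by rw [hempty]; exact Set.notMem_empty v
    rw [Set.mem_iInter] at this
    push_neg at this
    obtain ⟨D', hD'⟩ := this
    have h0 : P D' S = 0 := hactive D' S (fun h => hD' (h hv))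
    -- propagate zero back along the chain
    have hchain : ∀ a : Ω, Relation.ReflTransGen neighbor a D' → P a S = 0 := by
      intro a h
      induction h using Relation.ReflTransGen.head_induction_on with
      | refl => exact h0
      | head hab _ ih =>
        rename_i b c _
        have hle := hDP _ _ hab S
        rw [ih] at hle
        simp only [mul_zero] at hle
        exact le_antisymm hle (hnonneg _ _)
    exact hchain D (hconn D D')
  -- the sum concentrates on ∅
  have h1 : HasSum (fun S : Set V => P D S) (P D ∅) :=
    hasSum_single (∅ : Set V) (fun S hS => hzero S hS)
  exact h1.unique (htotal D)
end

section
/- Fix ε > 0 and ρ ∈ (0,1), and let τ(n) = -(1/ε)·ln(2(1 - ρ^{1/n})). For any fixed true count s > 0, the probability that a Laplace(s, 1/ε)-distributed noisy count exceeds τ(n) tends to 0 as n → ∞. -/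
open Real MeasureTheory Set Filter

lemma laplace_tail {ε s τ : ℝ} (hε : 0 < ε) (hτ : s ≤ τ) :
    (∫ x in Set.Ici τ, (ε / 2) * Real.exp (-ε * |x - s|))
      = (1/2) * Real.exp (ε * s) * Real.exp (-(ε * τ)) := by
  rw [MeasureTheory.integral_Ici_eq_integral_Ioi]
  have hcong : ∀ x ∈ Ioi τ, (ε / 2) * Real.exp (-ε * |x - s|)
      = (ε/2 * Real.exp (ε * s)) * Real.exp (-(ε * x)) := by
    intro x hx
    rw [abs_of_nonneg (by simp only [mem_Ioi] at hx; linarith)]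
    rw [mul_assoc, ← Real.exp_add]
    ring_nf
  rw [setIntegral_congr_fun measurableSet_Ioi hcong, MeasureTheory.integral_const_mul,
    integral_comp_mul_left_Ioi (fun y => Real.exp (-y)) τ hε, integral_exp_neg_Ioi]
  rw [smul_eq_mul]
  field_simp

/-- Fix `ε > 0` and `ρ ∈ (0,1)`, and let `τ(n) = -(1/ε)·ln(2(1 - ρ^(1/n)))`.
For any fixed true count `s > 0`, the probability that a Laplace(s, 1/ε)-distributed
noisy count exceeds `τ(n)` tends to 0 as `n → ∞`. -/
theorem retention_probability_vanishes {ε ρ s : ℝ} (hε : 0 < ε)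
    (hρ0 : 0 < ρ) (hρ1 : ρ < 1) (hs : 0 < s) :
    Filter.Tendsto
      (fun n : ℕ =>
        ∫ x in Set.Ici (-(1 / ε) * Real.log (2 * (1 - ρ ^ ((1 : ℝ) / n)))),
          (ε / 2) * Real.exp (-ε * |x - s|))
      Filter.atTop (nhds 0) := by
  set t : ℕ → ℝ := fun n => ρ ^ ((1 : ℝ) / n) with ht
  have ht1 : Tendsto t atTop (nhds 1) := by
    have h0 : Tendsto (fun n : ℕ => Real.log ρ * ((1 : ℝ) / n)) atTop (nhds 0) := by
      simpa using tendsto_one_div_atTop_nhds_zero_nat.const_mul (Real.log ρ)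
    have := (Real.continuous_exp.tendsto 0).comp h0
    simp only [Function.comp_def, Real.exp_zero] at this
    exact this.congr fun n => (Real.rpow_def_of_pos hρ0 _).symm
  have hlim : Tendsto (fun n => Real.exp (ε * s) * (1 - t n)) atTop (nhds 0) := by
    have : Tendsto (fun n => 1 - t n) atTop (nhds 0) := by
      simpa using ht1.const_sub 1
    simpa using (this.const_mul (Real.exp (ε * s)))
  refine Tendsto.congr' ?_ hlim
  have hc : 0 < Real.exp (-(ε * s)) / 2 := by positivity
  have h1 : ∀ᶠ n : ℕ in atTop, 1 - Real.exp (-(ε * s)) / 2 < t n :=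
    ht1.eventually (eventually_gt_nhds (by linarith))
  have h2 : ∀ᶠ n : ℕ in atTop, 1 ≤ n := eventually_ge_atTop 1
  filter_upwards [h1, h2] with n hn1 hn2
  have hnpos : (0 : ℝ) < (1 : ℝ) / n := by
    have : (0:ℝ) < (n:ℝ) := by exact_mod_cast hn2
    positivity
  have htlt1 : t n < 1 := Real.rpow_lt_one hρ0.le hρ1 hnpos
  have hu : 0 < 1 - t n := by linarith
  have hulow : 1 - t n < Real.exp (-(ε * s)) / 2 := by linarith
  have h2u : 0 < 2 * (1 - t n) := by linarith
  have hτs : s ≤ -(1 / ε) * Real.log (2 * (1 - t n)) := by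
    have hlog : Real.log (2 * (1 - t n)) < -(ε * s) := by
      have : 2 * (1 - t n) < Real.exp (-(ε * s)) := by linarith
      calc Real.log (2 * (1 - t n)) < Real.log (Real.exp (-(ε * s))) :=
            Real.log_lt_log h2u this
        _ = -(ε * s) := Real.log_exp _
    rw [neg_mul, le_neg, div_mul_eq_mul_div, div_le_iff₀ hε, one_mul]
    nlinarith [hlog]
  rw [laplace_tail hε hτs]
  rw [show -(ε * (-(1 / ε) * Real.log (2 * (1 - t n))))
      = Real.log (2 * (1 - t n)) by field_simp]
  rw [Real.exp_log h2u]
  ring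
end
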